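/- For every unit vector n ∈ ℝ³ and all τ, η ∈ ℝ, the 4×4 complex matrix i (α·n) + (1/2)(τ I₄ + η β) has determinant ( (4 + τ² − η²)/4 )². In particular this matrix is invertible if and only if η² − τ² ≠ 4, the confinement condition under which the δ-shell becomes impenetrable. -/

import Mathlib

open Matrix

/-- The Pauli matrices `σ₁, σ₂, σ₃`. -/
noncomputable def pauli : Fin 3 → Matrix (Fin 2) (Fin 2) ℂ
  | 0 => !![0, 1; 1, 0]
  | 1 => !![0, -Complex.I; Complex.I, 0]
  | 2 => !![1, 0; 0, -1]

/-- The Dirac matrices `α₁, α₂, α₃`, given in 2×2 blocks by `α_j = [[0, σ_j], [σ_j, 0]]`. -/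
noncomputable def diracAlpha : Fin 3 → Matrix (Fin 4) (Fin 4) ℂ
  | 0 => !![0, 0, 0, 1;
            0, 0, 1, 0;
            0, 1, 0, 0;
            1, 0, 0, 0]
  | 1 => !![0, 0, 0, -Complex.I;
            0, 0, Complex.I, 0;
            0, -Complex.I, 0, 0;
            Complex.I, 0, 0, 0]
  | 2 => !![0, 0, 1, 0;
            0, 0, 0, -1;
            1, 0, 0, 0;
            0, -1, 0, 0]

/-- The Dirac matrix `β = [[I₂, 0], [0, -I₂]]`. -/
noncomputable def diracBeta : Matrix (Fin 4) (Fin 4) ℂ :=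
  !![1, 0, 0, 0;
     0, 1, 0, 0;
     0, 0, -1, 0;
     0, 0, 0, -1]

/-- For `p ∈ ℝ³`, the matrix `α·p = Σ_j p_j α_j`. -/
noncomputable def alphaDot (p : EuclideanSpace ℝ (Fin 3)) : Matrix (Fin 4) (Fin 4) ℂ :=
  ∑ j : Fin 3, (p j : ℂ) • diracAlpha j

/-- Explicit expansion of the determinant of a 4×4 complex matrix. -/
private lemma det_fin_four_aux (M : Matrix (Fin 4) (Fin 4) ℂ) :
    M.det =
      M 0 0*M 1 1*M 2 2*M 3 3 - M 0 0*M 1 1*M 2 3*M 3 2 - M 0 0*M 1 2*M 2 1*M 3 3 + M 0 0*M 1 2*M 2 3*M 3 1 + M 0 0*M 1 3*M 2 1*M 3 2 - M 0 0*M 1 3*M 2 2*M 3 1 - M 0 1*M 1 0*M 2 2*M 3 3 + M 0 1*M 1 0*M 2 3*M 3 2 + M 0 1*M 1 2*M 2 0*M 3 3 - M 0 1*M 1 2*M 2 3*M 3 0 - M 0 1*M 1 3*M 2 0*M 3 2 + M 0 1*M 1 3*M 2 2*M 3 0 + M 0 2*M 1 0*M 2 1*M 3 3 - M 0 2*M 1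 0*M 2 3*M 3 1 - M 0 2*M 1 1*M 2 0*M 3 3 + M 0 2*M 1 1*M 2 3*M 3 0 + M 0 2*M 1 3*M 2 0*M 3 1 - M 0 2*M 1 3*M 2 1*M 3 0 - M 0 3*M 1 0*M 2 1*M 3 2 + M 0 3*M 1 0*M 2 2*M 3 1 + M 0 3*M 1 1*M 2 0*M 3 2 - M 0 3*M 1 1*M 2 2*M 3 0 - M 0 3*M 1 2*M 2 0*M 3 1 + M 0 3*M 1 2*M 2 1*M 3 0 := by
  simp only [det_succ_row_zero, Fin.sum_univ_succ, Fin.sum_univ_zero, submatrix_apply,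
    submatrix_submatrix, det_unique, Fin.default_eq_zero, Function.comp_apply,
    Fin.zero_succAbove, Fin.succ_succAbove_zero, Fin.succ_succAbove_one,
    Fin.succ_succAbove_succ, Fin.succ_zero_eq_one, Fin.succ_one_eq_two,
    show (2:Fin 3).succ = 3 from rfl, show (1:Fin 2).succ = 2 from rfl,
    show Fin.succAbove (1:Fin 4) 2 = 3 by decide, show Fin.succAbove (2:Fin 4) 2 = 3 by decide,
    show Fin.succAbove (3:Fin 4) 2 = 2 by decide,
    Fin.val_zero, Fin.val_succ, Fin.val_eq_zero, Finset.univ_unique, Finset.sum_singleton,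
    pow_succ, pow_zero]
  norm_num
  ring

/-- For a unit vector `n ∈ ℝ³` and `τ, η ∈ ℝ`, the transmission-condition matrix
`i (α·n) + (1/2)(τ I₄ + η β)` has determinant `((4 + τ² - η²)/4)²`; in particular it is
invertible if and only if `η² - τ² ≠ 4` (the confinement condition). -/
theorem shell_transmission_matrix_det (n : EuclideanSpace ℝ (Fin 3)) (hn : ‖n‖ = 1)
    (τ η : ℝ) :
    (Complex.I • alphaDot n +
        (1 / 2 : ℂ) • ((τ : ℂ) • (1 : Matrix (Fin 4) (Fin 4) ℂ) + (η : ℂ) • diracBeta)).det =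
      (((4 + τ ^ 2 - η ^ 2) / 4 : ℝ) : ℂ) ^ 2 ∧
    (IsUnit (Complex.I • alphaDot n +
        (1 / 2 : ℂ) • ((τ : ℂ) • (1 : Matrix (Fin 4) (Fin 4) ℂ) + (η : ℂ) • diracBeta)) ↔
      η ^ 2 - τ ^ 2 ≠ 4) := by
  have hn2 : ((n 0 : ℂ)) ^ 2 + (n 1 : ℂ) ^ 2 + (n 2 : ℂ) ^ 2 = 1 := by
    have h := hn
    rw [EuclideanSpace.norm_eq] at h
    have h2 : (n 0) ^ 2 + (n 1) ^ 2 + (n 2) ^ 2 = 1 := by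
      have := congrArg (· ^ 2) h
      simp only [one_pow] at this
      rw [Real.sq_sqrt (by positivity)] at this
      simpa [Fin.sum_univ_three, sq_abs] using this
    have h3 := congrArg (fun x : ℝ => (x : ℂ)) h2
    push_cast at h3
    exact h3
  have hM : Complex.I • alphaDot n +
        (1 / 2 : ℂ) • ((τ : ℂ) • (1 : Matrix (Fin 4) (Fin 4) ℂ) + (η : ℂ) • diracBeta) =
      !![((τ:ℂ)+η)/2, 0, Complex.I*(n 2), Complex.I*(n 0)+(n 1);
         0, ((τ:ℂ)+η)/2, Complex.I*(n 0)-(n 1), -(Complex.I*(n 2));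
         Complex.I*(n 2), Complex.I*(n 0)+(n 1), ((τ:ℂ)-η)/2, 0;
         Complex.I*(n 0)-(n 1), -(Complex.I*(n 2)), 0, ((τ:ℂ)-η)/2] := by
    have halpha : alphaDot n =
        (n 0 : ℂ) • diracAlpha 0 + (n 1 : ℂ) • diracAlpha 1 + (n 2 : ℂ) • diracAlpha 2 := by
      simp [alphaDot, Fin.sum_univ_three]
    rw [halpha]
    show Complex.I • ((n 0 : ℂ) • !![(0:ℂ), 0, 0, 1; 0, 0, 1, 0; 0, 1, 0, 0; 1, 0, 0, 0]
        + (n 1 : ℂ) • !![(0:ℂ), 0, 0, -Complex.I; 0, 0, Complex.I, 0; 0, -Complex.I, 0, 0;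
            Complex.I, 0, 0, 0]
        + (n 2 : ℂ) • !![(0:ℂ), 0, 1, 0; 0, 0, 0, -1; 1, 0, 0, 0; 0, -1, 0, 0]) +
        (1 / 2 : ℂ) • ((τ : ℂ) • (1 : Matrix (Fin 4) (Fin 4) ℂ) + (η : ℂ) •
          !![(1:ℂ), 0, 0, 0; 0, 1, 0, 0; 0, 0, -1, 0; 0, 0, 0, -1]) = _
    ext i j
    fin_cases i <;> fin_cases j <;>
      simp [Matrix.one_apply] <;> norm_num [Matrix.vecHead, Matrix.vecTail] <;>
        first
        | ring1
        | linear_combination ((n 1 : ℂ)) * Complex.I_sq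
        | linear_combination (-(n 1 : ℂ)) * Complex.I_sq
  have hdet : (Complex.I • alphaDot n +
        (1 / 2 : ℂ) • ((τ : ℂ) • (1 : Matrix (Fin 4) (Fin 4) ℂ) + (η : ℂ) • diracBeta)).det =
      (((4 + τ ^ 2 - η ^ 2) / 4 : ℝ) : ℂ) ^ 2 := by
    rw [hM, det_fin_four_aux]
    simp only [Matrix.of_apply, Matrix.cons_val', Matrix.cons_val_zero, Matrix.cons_val_one,
      Matrix.cons_val_two, Matrix.cons_val_three, Matrix.head_cons, Matrix.tail_cons]
    norm_num [Matrix.vecHead, Matrix.vecTail]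
    linear_combination
      (-Complex.I^2 * (((τ:ℂ)^2-(η:ℂ)^2)/2
          - Complex.I^2*((n 0:ℂ)^2+(n 1:ℂ)^2+(n 2:ℂ)^2) + 1)) * hn2
      + (-(((τ:ℂ)^2-(η:ℂ)^2)/2
          - Complex.I^2*((n 0:ℂ)^2+(n 1:ℂ)^2+(n 2:ℂ)^2) + 1)) * Complex.I_sq
      + ((τ:ℂ)^2*(n 1:ℂ)^2/2 - (η:ℂ)^2*(n 1:ℂ)^2/2
          - 2*Complex.I^2*(n 1:ℂ)^2*((n 0:ℂ)^2+(n 2:ℂ)^2)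
          + (n 1:ℂ)^4*(1-Complex.I^2)) * Complex.I_sq
  refine ⟨hdet, ?_⟩
  rw [Matrix.isUnit_iff_isUnit_det, hdet, isUnit_iff_ne_zero]
  constructor
  · intro h hc'
    apply h
    have h4 : ((4 + τ ^ 2 - η ^ 2) / 4 : ℝ) = 0 := by linarith
    simp [h4]
  · intro h hc'
    apply h
    have h0 : (((4 + τ ^ 2 - η ^ 2) / 4 : ℝ) : ℂ) = 0 := by
      exact pow_eq_zero_iff (n := 2) (by norm_num) |>.mp hc'
    have h4 : ((4 + τ ^ 2 - η ^ 2) / 4 : ℝ) = 0 := by exact_mod_cast h0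
    linarith
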